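/- Let τ be a nonempty index set, φ : τ → τ an injective self-map, and w : τ → ℂ a weight vector such that σ_{φ,w} maps ℓ²(τ) into ℓ²(τ). Then there exist a self-map η : τ → τ and a weight vector u : τ → ℂ with each u_α ∈ {conj(w_β) : β ∈ τ} ∪ {0}, such that σ_{η,u} maps ℓ²(τ) into ℓ²(τ) and (σ_{φ,w}|_{ℓ²(τ)})* = σ_{η,u}|_{ℓ²(τ)}; i.e., the adjoint of a weighted generalized shift operator with injective φ is itself a weighted generalized shift operator. -/

import Mathlib

/-- If `φ` is injective, the adjoint of a bounded weighted generalized shift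
operator `σ_{φ,w}|_{ℓ²(τ)}` is itself a weighted generalized shift operator, with weights in
`{conj(w_β) : β ∈ τ} ∪ {0}`. -/
theorem weighted_shift_adjoint_of_injective {τ : Type*} [Nonempty τ] (φ : τ → τ) (w : τ → ℂ)
    (hφ : Function.Injective φ)
    (T : lp (fun _ : τ => ℂ) 2 →L[ℂ] lp (fun _ : τ => ℂ) 2)
    (hT : ∀ (x : lp (fun _ : τ => ℂ) 2) (α : τ), T x α = w α * x (φ α)) :
    ∃ (η : τ → τ) (u : τ → ℂ),
      (∀ α, u α ∈ Set.range (fun β => (starRingEnd ℂ) (w β)) ∪ {0}) ∧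
      (∀ (x : τ → ℂ), Memℓp x 2 → Memℓp (fun α => u α * x (η α)) 2) ∧
      (∀ (y : lp (fun _ : τ => ℂ) 2) (θ : τ),
        ContinuousLinearMap.adjoint T y θ = u θ * y (η θ)) := by
  classical
  set η : τ → τ := fun θ => if h : ∃ β, φ β = θ then h.choose else Classical.arbitrary τ
    with hη
  set u : τ → ℂ := fun θ =>
      if ∃ β, φ β = θ then (starRingEnd ℂ) (w (η θ)) else 0 with hu
  have key : ∀ (y : lp (fun _ : τ => ℂ) 2) (θ : τ),
      ContinuousLinearMap.adjoint T y θ = u θ * y (η θ) := by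
    intro y θ
    have h1 : (ContinuousLinearMap.adjoint T y) θ
        = inner ℂ (lp.single 2 θ (1 : ℂ)) (ContinuousLinearMap.adjoint T y) := by
      rw [lp.inner_single_left]
      simp
    rw [h1, ContinuousLinearMap.adjoint_inner_right, lp.inner_eq_tsum]
    have hs : ∀ α : τ, (T (lp.single 2 θ (1 : ℂ))) α
        = w α * (if φ α = θ then (1 : ℂ) else 0) := by
      intro α
      rw [hT]
      congr 1
      rw [lp.single_apply]
      simp [Pi.single_apply]
    by_cases h : ∃ β, φ β = θ
    · have hβ : φ h.choose = θ := h.choose_spec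
      have hηθ : η θ = h.choose := by simp [hη, h]
      rw [tsum_eq_single h.choose]
      · simp only [hs, hβ, if_pos rfl, mul_one, hu, hηθ, if_pos h]
        simp [RCLike.inner_apply]
        ring
      · intro α hα
        have : ¬ (φ α = θ) := fun hc => hα (hφ (hc.trans hβ.symm))
        simp [RCLike.inner_apply, hs, this]
    · have : ∀ α : τ, (starRingEnd ℂ) ((T (lp.single 2 θ (1 : ℂ))) α) * y α = 0 := by
        intro α
        have : ¬ (φ α = θ) := fun hc => h ⟨α, hc⟩
        simp [hs, this]
      simp [fun α => (mul_comm (y α) _).trans (this α), hu, h]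
  refine ⟨η, u, ?_, ?_, key⟩
  · intro α
    by_cases h : ∃ β, φ β = α
    · left; exact ⟨η α, by simp [hu, h]⟩
    · right; simp [hu, h]
  · intro x hx
    have h2 := lp.memℓp (ContinuousLinearMap.adjoint T (⟨x, hx⟩ : lp (fun _ : τ => ℂ) 2))
    have h3 : (fun α => u α * x (η α))
        = ⇑(ContinuousLinearMap.adjoint T (⟨x, hx⟩ : lp (fun _ : τ => ℂ) 2)) := by
      funext α
      exact (key ⟨x, hx⟩ α).symm
    rw [h3]
    exact h2
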